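/- Let m be a positive integer, R a commutative ring, and ζ ∈ R an element at which the m-th cyclotomic polynomial with integer coefficients evaluates to zero. Then ∏_{d=1}^{m−1} (1 − ζ^d) = m in R. -/

import Mathlib

/-- If `ζ` is a root in a commutative ring `R` of the `m`-th cyclotomic polynomial over `ℤ`,
then `∏_{d=1}^{m−1} (1 − ζ^d) = m`. -/
theorem prod_one_sub_pow_eq_card
    {R : Type*} [CommRing R] (m : ℕ) (hm : 0 < m) (ζ : R)
    (hζ : Polynomial.aeval ζ (Polynomial.cyclotomic m ℤ) = 0) :
    ∏ d ∈ Finset.Ico 1 m, (1 - ζ ^ d) = (m : R) := by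
  classical
  set I : Ideal (Polynomial ℤ) := Ideal.span {Polynomial.cyclotomic m ℤ}
  have hirr : Irreducible (Polynomial.cyclotomic m ℤ) := Polynomial.cyclotomic.irreducible hm
  have hprime : Prime (Polynomial.cyclotomic m ℤ) := hirr.prime
  have hIprime : I.IsPrime := (Ideal.span_singleton_prime hprime.ne_zero).mpr hprime
  letI : IsDomain (Polynomial ℤ ⧸ I) := Ideal.Quotient.isDomain I
  set A := Polynomial ℤ ⧸ I
  -- `m ≠ 0` in `A`
  have hmA : (m : A) ≠ 0 := by
    intro h
    have : ((m : ℤ) : Polynomial ℤ) ∈ I := by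
      refine (Ideal.Quotient.eq_zero_iff_mem (I := I)
        (a := ((m : ℤ) : Polynomial ℤ))).mp ?_
      rw [map_intCast]
      exact_mod_cast h
    rw [Ideal.mem_span_singleton] at this
    have hdeg := Polynomial.natDegree_le_of_dvd this (by
      simpa using (Int.natCast_ne_zero.mpr hm.ne'))
    rw [Polynomial.natDegree_cyclotomic, Polynomial.natDegree_intCast] at hdeg
    exact absurd hdeg (by simpa using (Nat.totient_pos.mpr hm).ne')
  haveI : NeZero (m : A) := ⟨hmA⟩
  -- X is a primitive m-th root of unity in A
  set x : A := Ideal.Quotient.mk I Polynomial.X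
  have key : ((Polynomial.aeval x : Polynomial ℤ →ₐ[ℤ] A) :
      Polynomial ℤ →+* A) = Ideal.Quotient.mk I :=
    Polynomial.ringHom_ext (fun a => by simp) (by simp [x])
  have hroot : Polynomial.IsRoot (Polynomial.cyclotomic m A) x := by
    have h0 : Polynomial.aeval x (Polynomial.cyclotomic m ℤ) = 0 := by
      have := DFunLike.congr_fun key (Polynomial.cyclotomic m ℤ)
      simp only [AlgHom.coe_toRingHom] at this
      rw [this]
      exact Ideal.Quotient.eq_zero_iff_mem.mpr (Ideal.subset_span rfl)
    rwa [Polynomial.aeval_def, ← Polynomial.eval_map,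
      Polynomial.map_cyclotomic] at h0
  have hprim : IsPrimitiveRoot x m := Polynomial.isRoot_cyclotomic_iff.mp hroot
  -- the product identity in A
  obtain ⟨n, rfl⟩ : ∃ n, m = n + 1 := ⟨m - 1, (Nat.succ_pred_eq_of_pos hm).symm⟩
  have hA : ∏ k ∈ Finset.range n, (1 - x ^ (k + 1)) = ((n : A) + 1) :=
    hprim.prod_one_sub_pow_eq_order
  -- transfer to R via the map sending x to ζ
  have hmem : ∀ p ∈ I, Polynomial.aeval ζ p = 0 := by
    intro p hp
    rw [Ideal.mem_span_singleton] at hp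
    obtain ⟨q, rfl⟩ := hp
    rw [map_mul, hζ, zero_mul]
  let φ : A →+* R := Ideal.Quotient.lift I (Polynomial.aeval ζ).toRingHom hmem
  have hφx : φ x = ζ := by
    show Ideal.Quotient.lift I _ hmem (Ideal.Quotient.mk I Polynomial.X) = ζ
    rw [Ideal.Quotient.lift_mk]
    simp
  have := congrArg φ hA
  simp only [map_prod, map_sub, map_one, map_pow, map_add, map_natCast, hφx] at this
  rw [Finset.prod_Ico_eq_prod_range]
  simpa [add_comm] using this
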